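/- arXiv:math/0010211 — 2 statements merged into one kernel-verified Lean document; each statement's English description precedes it below -/
import Mathlib

section
/- Let n ≥ 3, and in ℂ[x_1,…,x_n] set p = x_1 + x_2 + ⋯ + x_n − x_1x_2⋯x_n and q = x_1 + (x_2 + x_3 + ⋯ + x_n)·x_2x_3⋯x_{n−1} − x_1x_2⋯x_n. Then there is no ℂ-algebra automorphism σ of ℂ[x_1,…,x_n] such that σ(⟨p⟩) = ⟨q⟩; that is, the hypersurfaces V(p) and V(q) are inequivalent embeddings in ℂ^n, even though they are isomorphic. -/
open MvPolynomial

lemma isUnit_mv : ∀ (n : ℕ) (f : MvPolynomial (Fin n) ℂ), IsUnit f → ∃ c : ℂ, c ≠ 0 ∧ f = C c := by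
  intro n
  induction n with
  | zero =>
    intro f hf
    have hf0 : f ≠ 0 := hf.ne_zero
    refine ⟨coeff 0 f, fun h0 => ?_, eq_C_of_isEmpty f⟩
    exact hf0 (by rw [eq_C_of_isEmpty f, h0, map_zero])
  | succ n ih =>
    intro f hf
    obtain ⟨r, hr, hCr⟩ := Polynomial.isUnit_iff.mp (hf.map (finSuccEquiv ℂ n))
    obtain ⟨c, hc, rfl⟩ := ih r hr
    refine ⟨c, hc, ?_⟩
    have h2 := RingHom.congr_fun (finSuccEquiv_comp_C_eq_C (R := ℂ) n) c
    have : f = (finSuccEquiv ℂ n).symm (Polynomial.C (C c)) := by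
      rw [hCr]; simp
    rw [this]
    exact h2

lemma pderiv_aeval_chain {n : ℕ} (g : Fin n → MvPolynomial (Fin n) ℂ)
    (f : MvPolynomial (Fin n) ℂ) (i : Fin n) :
    pderiv i (aeval g f) = ∑ j, aeval g (pderiv j f) * pderiv i (g j) := by
  induction f using MvPolynomial.induction_on with
  | C a => simp
  | add f₁ f₂ h1 h2 =>
    simp only [map_add, h1, h2, ← Finset.sum_add_distrib, add_mul]
  | mul_X f j hf =>
    rw [map_mul, aeval_X, pderiv_mul, hf, Finset.sum_mul]
    have : ∀ k : Fin n, aeval g (pderiv k (f * X j)) * pderiv i (g k)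
        = aeval g (pderiv k f) * pderiv i (g k) * g j
          + (if k = j then aeval g f * pderiv i (g j) else 0) := by
      intro k
      rw [pderiv_mul]
      by_cases hkj : k = j
      · subst hkj; simp [pderiv_X_self]; ring
      · simp [pderiv_X_of_ne (Ne.symm hkj), hkj]; ring
    rw [Finset.sum_congr rfl fun k _ => this k, Finset.sum_add_distrib,
      Finset.sum_ite_eq' Finset.univ j]
    simp

lemma pderiv_prod_X {n : ℕ} (s : Finset (Fin n)) (i : Fin n) :
    pderiv i (∏ j ∈ s, (X j : MvPolynomial (Fin n) ℂ))
      = if i ∈ s then ∏ j ∈ s.erase i, (X j : MvPolynomial (Fin n) ℂ) else 0 := by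
  induction s using Finset.induction_on with
  | empty => simp
  | @insert k s hk ih =>
    rw [Finset.prod_insert hk, pderiv_mul, ih]
    by_cases hik : i = k
    · subst hik
      simp [hk, Finset.erase_insert hk]
    · rw [pderiv_X_of_ne (fun h => hik h.symm)]
      by_cases his : i ∈ s
      · simp only [zero_mul, his, if_true, Finset.mem_insert, hik, false_or, zero_add]
        rw [Finset.erase_insert_of_ne (fun h => hik h.symm), Finset.prod_insert
          (fun h => hk (Finset.mem_of_mem_erase h))]
      · simp [his, hik]

lemma pderiv_sum_X {n : ℕ} (s : Finset (Fin n)) (i : Fin n) :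
    pderiv i (∑ j ∈ s, (X j : MvPolynomial (Fin n) ℂ))
      = if i ∈ s then 1 else 0 := by
  classical
  rw [map_sum]
  rw [Finset.sum_congr rfl (fun j _ => pderiv_X i j)]
  simp [Finset.sum_ite_eq' s i, Pi.single_apply]

lemma q_no_crit (n : ℕ) (hn : 3 ≤ n) (q : MvPolynomial (Fin n) ℂ)
    (hq : q = X (⟨0, lt_of_lt_of_le (by norm_num) hn⟩ : Fin n)
        + (∑ i ∈ Finset.univ.filter (fun i : Fin n => 0 < i.val), X i)
          * (∏ i ∈ Finset.univ.filter (fun i : Fin n => 0 < i.val ∧ i.val < n - 1), X i)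
        - ∏ i, X i)
    (a : Fin n → ℂ) (h : ∀ i : Fin n, aeval a (pderiv i q) = 0) : False := by
  classical
  set i0 : Fin n := ⟨0, by omega⟩ with hi0
  set lst : Fin n := ⟨n - 1, by omega⟩ with hlst
  set sP : Finset (Fin n) := Finset.univ.filter (fun i : Fin n => 0 < i.val) with hsP
  set sM : Finset (Fin n) := Finset.univ.filter (fun i : Fin n => 0 < i.val ∧ i.val < n - 1) with hsM
  have hi0sP : i0 ∉ sP := by simp [hsP, hi0]
  have hi0sM : i0 ∉ sM := by simp [hsM, hi0]
  have hlstsP : lst ∈ sP := by simp [hsP, hlst]; omega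
  have hlstsM : lst ∉ sM := by simp [hsM, hlst]
  set Sv : ℂ := ∑ i ∈ sP, a i with hSv
  set Mv : ℂ := ∏ i ∈ sM, a i with hMv
  -- the general evaluated equation
  have key : ∀ i : Fin n,
      (if i0 = i then (1:ℂ) else 0)
      + ((if i ∈ sP then (1:ℂ) else 0) * Mv
        + Sv * (if i ∈ sM then ∏ j ∈ sM.erase i, a j else (0:ℂ)))
      - ∏ j ∈ Finset.univ.erase i, a j = 0 := by
    intro i
    have hh := h i
    rw [hq] at hh
    rw [map_sub, map_add, pderiv_mul, pderiv_sum_X, pderiv_prod_X, pderiv_prod_X,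
      pderiv_X] at hh
    simp only [Finset.mem_univ, if_true, Pi.single_apply, map_sub, map_add, map_mul,
      apply_ite (aeval a), map_one, map_zero, map_prod, aeval_X, map_sum] at hh
    convert hh using 2 <;> simp [hSv, hMv]
  -- set identities
  have hset1 : Finset.univ.erase i0 = sP := by
    ext i; simp [hsP, hi0, Fin.ext_iff]
  have hset2 : Finset.univ.erase lst = insert i0 sM := by
    ext i; simp [hsM, hi0, hlst, Fin.ext_iff]; omega
  have hset3 : sP = insert lst sM := by
    ext i; simp [hsP, hsM, hlst, Fin.ext_iff]
    constructor
    · intro hi; rcases Nat.lt_or_ge i.val (n-1) with h1 | h1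
      · right; exact ⟨hi, h1⟩
      · left; omega
    · rintro (h1 | ⟨h1, _⟩) <;> omega
  have hset4 : (Finset.univ : Finset (Fin n)) = insert i0 sP := by
    ext i; simp [hsP, hi0, Fin.ext_iff]; omega
  -- equation at i0
  have E0 := key i0
  rw [if_pos rfl, if_neg hi0sP, if_neg hi0sM, hset1] at E0
  have hprodP : ∏ j ∈ sP, a j = 1 := by linear_combination -E0
  have hnz : ∀ j ∈ sP, a j ≠ 0 := by
    intro j hj h0
    rw [Finset.prod_eq_zero hj h0] at hprodP
    exact zero_ne_one hprodP
  have hMnz : Mv ≠ 0 := by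
    rw [hMv]
    apply Finset.prod_ne_zero_iff.mpr
    intro j hj
    apply hnz
    rw [hset3]; exact Finset.mem_insert_of_mem hj
  -- equation at lst
  have Elst := key lst
  have hlstne : i0 ≠ lst := by simp [hi0, hlst, Fin.ext_iff]; omega
  rw [if_neg hlstne, if_pos hlstsP, if_neg hlstsM, hset2,
    Finset.prod_insert hi0sM] at Elst
  have ha0 : a i0 = 1 := by
    have : Mv * (1 - a i0) = 0 := by linear_combination Elst
    rcases mul_eq_zero.mp this with h1 | h1
    · exact absurd h1 hMnz
    · linear_combination -h1
  -- product over all of univ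
  have hPv : ∏ j, a j = 1 := by
    rw [hset4, Finset.prod_insert hi0sP, ha0, hprodP, one_mul]
  -- equation for i ∈ sM
  have Emid : ∀ i ∈ sM, a i * Mv = 1 - Sv * Mv := by
    intro i hi
    have hiP : i ∈ sP := by rw [hset3]; exact Finset.mem_insert_of_mem hi
    have hineq : i0 ≠ i := fun h => hi0sM (h ▸ hi)
    have E := key i
    rw [if_neg hineq, if_pos hiP, if_pos hi] at E
    have hmulM : a i * ∏ j ∈ sM.erase i, a j = Mv := Finset.mul_prod_erase sM a hi
    have hmulU : a i * ∏ j ∈ Finset.univ.erase i, a j = 1 := by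
      rw [Finset.mul_prod_erase Finset.univ a (Finset.mem_univ i), hPv]
    have := congrArg (fun z => a i * z) E
    simp only [mul_zero] at this
    linear_combination this - Sv * hmulM + hmulU
  -- cardinality
  have hcardP : sP.card = n - 1 := by
    rw [← hset1, Finset.card_erase_of_mem (Finset.mem_univ i0), Finset.card_univ,
      Fintype.card_fin]
  have hcardM : sM.card = n - 2 := by
    have := hcardP
    rw [hset3, Finset.card_insert_of_notMem hlstsM] at this
    omega
  -- sum equation
  have hlastMv : a lst * Mv = 1 := by
    rw [← hprodP, hset3, Finset.prod_insert hlstsM]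
  have hsum2 : ∑ i ∈ sM, (a i * Mv) = (sM.card : ℂ) * (1 - Sv * Mv) := by
    rw [Finset.sum_congr rfl Emid, Finset.sum_const, nsmul_eq_mul]
  have hsum : Sv * Mv = a lst * Mv + (sM.card : ℂ) * (1 - Sv * Mv) := by
    calc Sv * Mv = ∑ i ∈ sP, a i * Mv := by rw [hSv, Finset.sum_mul]
    _ = a lst * Mv + ∑ i ∈ sM, (a i * Mv) := by rw [hset3, Finset.sum_insert hlstsM]
    _ = a lst * Mv + (sM.card : ℂ) * (1 - Sv * Mv) := by rw [hsum2]
  have hn1 : ((n : ℂ) - 1) ≠ 0 := by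
    intro h0
    have : (n : ℂ) = 1 := by linear_combination h0
    have : n = 1 := by exact_mod_cast this
    omega
  have hSvMv : Sv * Mv = 1 := by
    have hc : ((n - 2 : ℕ) : ℂ) = (n : ℂ) - 2 := by
      have : ((n - 2 : ℕ) : ℂ) = ((n : ℕ) : ℂ) - ((2 : ℕ) : ℂ) := by
        rw [Nat.cast_sub (by omega)]
      simpa using this
    rw [hlastMv, hcardM, hc] at hsum
    have : ((n : ℂ) - 1) * (Sv * Mv - 1) = 0 := by linear_combination hsum
    rcases mul_eq_zero.mp this with h1 | h1
    · exact absurd h1 hn1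
    · linear_combination h1
  -- contradiction at i1
  have hi1 : (⟨1, by omega⟩ : Fin n) ∈ sM := by simp [hsM]; omega
  have := Emid _ hi1
  rw [hSvMv] at this
  simp only [sub_self] at this
  rcases mul_eq_zero.mp this with h1 | h1
  · exact hnz _ (by rw [hset3]; exact Finset.mem_insert_of_mem hi1) h1
  · exact hMnz h1


/-- The inequivalence conclusion of Proposition 1.4: no `ℂ`-algebra automorphism of
`ℂ[x₁,…,xₙ]` maps `⟨p⟩` onto `⟨q⟩`, i.e. the hypersurfaces `V(p)` and `V(q)` are
inequivalent embeddings in `ℂⁿ`. -/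
theorem prop_1_4_inequivalence (n : ℕ) (hn : 3 ≤ n)
    (p q : MvPolynomial (Fin n) ℂ)
    (hp : p = (∑ i, X i) - ∏ i, X i)
    (hq : q = X (⟨0, by omega⟩ : Fin n)
        + (∑ i ∈ Finset.univ.filter (fun i : Fin n => 0 < i.val), X i)
          * (∏ i ∈ Finset.univ.filter (fun i : Fin n => 0 < i.val ∧ i.val < n - 1), X i)
        - ∏ i, X i) :
    ¬ ∃ σ : MvPolynomial (Fin n) ℂ ≃ₐ[ℂ] MvPolynomial (Fin n) ℂ,
      Ideal.map σ (Ideal.span {p}) = Ideal.span {q} := by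
  rintro ⟨σ, hσ⟩
  -- q is a constant multiple of σ p
  have hmap : Ideal.span {σ p} = Ideal.span {q} := by
    rw [← hσ, Ideal.map_span, Set.image_singleton]
  obtain ⟨u, hu⟩ := Ideal.span_singleton_eq_span_singleton.mp hmap
  obtain ⟨c, hc, hCu⟩ := isUnit_mv n (u : MvPolynomial (Fin n) ℂ) u.isUnit
  have hqc : q = σ p * C c := by rw [← hu, hCu]
  -- the critical point of p
  set b : Fin n → ℂ := fun _ => 1 with hb
  have hcritp : ∀ j : Fin n, aeval b (pderiv j p) = 0 := by
    intro j
    rw [hp, map_sub, pderiv_sum_X, pderiv_prod_X, if_pos (Finset.mem_univ j),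
      if_pos (Finset.mem_univ j), map_sub, map_one, map_prod]
    simp [hb]
  -- transport to a critical point of σ p
  set Φ : MvPolynomial (Fin n) ℂ →ₐ[ℂ] ℂ := (aeval b).comp σ.symm.toAlgHom with hΦdef
  set a : Fin n → ℂ := fun k => Φ (X k) with ha
  have hΦ : Φ = aeval a := aeval_unique Φ
  have hback : ∀ f : MvPolynomial (Fin n) ℂ, aeval a (σ f) = aeval b f := by
    intro f
    rw [← hΦ, hΦdef]
    simp
  have hσf : ∀ f : MvPolynomial (Fin n) ℂ,
      σ f = aeval (fun j => σ (X j)) f := by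
    intro f
    have h2 := aeval_unique (σ : MvPolynomial (Fin n) ℂ →ₐ[ℂ] MvPolynomial (Fin n) ℂ)
    exact congrFun (congrArg (fun (g : MvPolynomial (Fin n) ℂ →ₐ[ℂ] MvPolynomial (Fin n) ℂ) => (g : MvPolynomial (Fin n) ℂ → MvPolynomial (Fin n) ℂ)) h2) f
  have hcritσp : ∀ i : Fin n, aeval a (pderiv i (σ p)) = 0 := by
    intro i
    rw [hσf p, pderiv_aeval_chain, map_sum]
    apply Finset.sum_eq_zero
    intro j _
    rw [map_mul]
    have : aeval a ((aeval fun j => σ (X j)) (pderiv j p)) = 0 := by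
      rw [← hσf, hback, hcritp]
    rw [this, zero_mul]
  -- so q has a critical point
  have hcritq : ∀ i : Fin n, aeval a (pderiv i q) = 0 := by
    intro i
    rw [hqc, pderiv_mul, pderiv_C, mul_zero, add_zero, map_mul, hcritσp, zero_mul]
  exact q_no_crit n hn q hq a hcritq
end

section
/- In ℂ[x,y], set p = x² + y² − 1 and q = x²y − 1. Then: (a) the quotient algebras ℂ[x,y]/⟨p⟩ and ℂ[x,y]/⟨q⟩ are isomorphic as ℂ-algebras; and (b) there is no ℂ-algebra automorphism σ of ℂ[x,y] such that σ(⟨p⟩) = ⟨q⟩. (Indeed, grad(p) vanishes only at the origin, while grad(q) has infinitely many common zeros.) -/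
open MvPolynomial

noncomputable section

abbrev Rb := MvPolynomial (Fin 2) ℂ

lemma mv_unit_eq_Cb : ∀ (n : ℕ) (u : MvPolynomial (Fin n) ℂ), IsUnit u → ∃ c : ℂ, u = C c := by
  intro n
  induction n with
  | zero => intro u _; exact ⟨coeff 0 u, eq_C_of_isEmpty u⟩
  | succ n ih =>
    intro u hu
    have h1 : IsUnit (finSuccEquiv ℂ n u) := hu.map _
    obtain ⟨r, hr, hru⟩ := Polynomial.isUnit_iff.1 h1
    obtain ⟨c, rfl⟩ := ih r hr
    refine ⟨c, ?_⟩
    have := congrArg (finSuccEquiv ℂ n).symm hru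
    rw [AlgEquiv.symm_apply_apply] at this
    rw [← this]
    have h2 := congrFun (congrArg (fun f => f.toFun) (finSuccEquiv_comp_C_eq_C (R := ℂ) n)) c
    simpa using h2

lemma deriv_vanish (a : Fin 2 → ℂ) (f : Rb)
    (hf : f ∈ (vanishingIdeal ℂ {a} : Ideal Rb)^2) (i : Fin 2) :
    eval a (pderiv i f) = 0 := by
  rw [pow_two] at hf
  refine Submodule.mul_induction_on hf ?_ ?_
  · intro g hg h hh
    have hg0 : eval a g = 0 := (mem_vanishingIdeal_singleton_iff a g).1 hg
    have hh0 : eval a h = 0 := (mem_vanishingIdeal_singleton_iff a h).1 hh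
    rw [pderiv_mul]
    simp [hg0, hh0]
  · intro x y hx hy
    simp [map_add, hx, hy]

lemma partb (p q : MvPolynomial (Fin 2) ℂ)
    (hp : p = X 0 ^ 2 + X 1 ^ 2 - 1)
    (hq : q = X 0 ^ 2 * X 1 - 1) :
    ¬ ∃ σ : MvPolynomial (Fin 2) ℂ ≃ₐ[ℂ] MvPolynomial (Fin 2) ℂ,
      Ideal.map σ (Ideal.span {p}) = Ideal.span {q} := by
  rintro ⟨σ, hσ⟩
  set τ : Rb ≃+* Rb := σ.toRingEquiv.symm with hτdef
  -- span {τ q} = span {p}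
  have hmap : Ideal.map (τ : Rb →+* Rb) (Ideal.span {q}) = Ideal.span {p} := by
    rw [← hσ]
    exact Ideal.map_of_equiv σ.toRingEquiv
  have hspan : Ideal.span {τ q} = Ideal.span {p} := by
    rw [← hmap, Ideal.map_span, Set.image_singleton]
    rfl
  -- τ q = C c * p with c ≠ 0
  obtain ⟨u, hu⟩ := (Ideal.span_singleton_eq_span_singleton.1 hspan.symm)
  obtain ⟨c, hc⟩ := mv_unit_eq_Cb 2 (u : Rb) u.isUnit
  have hcne : c ≠ 0 := by
    intro h
    have := u.isUnit
    rw [hc, h, map_zero] at this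
    exact not_isUnit_zero this
  have hτq : τ q = p * C c := by rw [← hu, hc]
  -- the two points
  set b₁ : Fin 2 → ℂ := ![0, 0] with hb₁
  set b₂ : Fin 2 → ℂ := ![0, 1] with hb₂
  have hmem : ∀ b : Fin 2 → ℂ, b 0 = 0 →
      q + 1 ∈ (vanishingIdeal ℂ {b} : Ideal Rb)^2 := by
    intro b hb
    have hx : (X 0 : Rb) ∈ vanishingIdeal ℂ {b} :=
      (mem_vanishingIdeal_singleton_iff b _).2 (by simp [hb])
    have hxy : (X 0 * X 1 : Rb) ∈ vanishingIdeal ℂ {b} :=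
      Ideal.mul_mem_right _ _ hx
    have : q + 1 = X 0 * (X 0 * X 1) := by rw [hq]; ring
    rw [this, pow_two]
    exact Ideal.mul_mem_mul hx hxy
  -- main step: for each such b, the image point is 0
  have main : ∀ b : Fin 2 → ℂ, b 0 = 0 →
      Ideal.map (τ : Rb →+* Rb) (vanishingIdeal ℂ {b}) = vanishingIdeal ℂ {(0 : Fin 2 → ℂ)} := by
    intro b hb
    have hmax : (Ideal.map (τ : Rb →+* Rb) (vanishingIdeal ℂ {b})).IsMaximal :=
      (Ideal.isMaximal_map_iff_of_bijective _ τ.bijective).2 inferInstance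
    obtain ⟨a, ha⟩ := isMaximal_iff_eq_vanishingIdeal_singleton.1 hmax
    rw [ha]
    have hmem2 : τ (q + 1) ∈ (vanishingIdeal ℂ {a} : Ideal Rb)^2 := by
      rw [← ha, ← Ideal.map_pow]
      exact Ideal.mem_map_of_mem _ (hmem b hb)
    have hτq1 : τ (q + 1) = C c * p + 1 := by
      rw [map_add, map_one, hτq]; ring
    rw [hτq1] at hmem2
    have hder : ∀ i : Fin 2, eval a (pderiv i (C c * p + 1)) = 0 :=
      fun i => deriv_vanish a _ hmem2 i
    have h0 : a 0 = 0 := by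
      have := hder 0
      rw [hp] at this
      simp [pderiv_mul, pderiv_X, pderiv_C, pderiv_one] at this
      rcases this with h | h
      · exact absurd h hcne
      · exact h
    have h1 : a 1 = 0 := by
      have := hder 1
      rw [hp] at this
      simp [pderiv_mul, pderiv_X, pderiv_C, pderiv_one] at this
      rcases this with h | h
      · exact absurd h hcne
      · exact h
    have : a = (0 : Fin 2 → ℂ) := by
      funext i
      fin_cases i
      · exact h0
      · exact h1
    rw [this]
  have heq : Ideal.map (τ : Rb →+* Rb) (vanishingIdeal ℂ {b₁})
      = Ideal.map (τ : Rb →+* Rb) (vanishingIdeal ℂ {b₂}) := by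
    rw [main b₁ (by simp [hb₁]), main b₂ (by simp [hb₂])]
  have heq2 : (vanishingIdeal ℂ {b₁} : Ideal Rb) = vanishingIdeal ℂ {b₂} := by
    have := congrArg (Ideal.map (τ.symm : Rb →+* Rb)) heq
    rwa [Ideal.map_of_equiv τ, Ideal.map_of_equiv τ] at this
  have hX1 : (X 1 : Rb) ∈ vanishingIdeal ℂ {b₁} :=
    (mem_vanishingIdeal_singleton_iff _ _).2 (by simp [hb₁])
  rw [heq2] at hX1
  have := (mem_vanishingIdeal_singleton_iff _ _).1 hX1
  simp [hb₂] at this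

abbrev R2 := MvPolynomial (Fin 2) ℂ



lemma hI2 : (C Complex.I : R2)^2 = -1 := by
  rw [← C_pow, Complex.I_sq, map_neg, map_one]

lemma h2 : (2 : R2) * C ((1:ℂ)/2) = 1 := by
  rw [← map_ofNat (C : ℂ →+* R2) 2, ← C_mul]; norm_num

def v1 : Fin 2 → R2 := ![C ((1:ℂ)/2) * (X 0 + X 0 * X 1),
    -(C Complex.I * C ((1:ℂ)/2)) * (X 0 - X 0 * X 1)]
def v2 : Fin 2 → R2 := ![X 0 + C Complex.I * X 1, (X 0 - C Complex.I * X 1)^2]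

lemma parta (p q : MvPolynomial (Fin 2) ℂ)
    (hp : p = X 0 ^ 2 + X 1 ^ 2 - 1)
    (hq : q = X 0 ^ 2 * X 1 - 1) :
    Nonempty ((MvPolynomial (Fin 2) ℂ ⧸ Ideal.span {p}) ≃ₐ[ℂ]
      (MvPolynomial (Fin 2) ℂ ⧸ Ideal.span {q})) := by
  have hFmem : ∀ a ∈ Ideal.span {p}, ((Ideal.Quotient.mkₐ ℂ (Ideal.span {q})).comp (aeval v1)) a = 0 := by
    have key : Ideal.span {p} ≤ Ideal.comap (aeval v1) (Ideal.span {q}) := by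
      rw [Ideal.span_le]
      rintro _ rfl
      simp only [SetLike.mem_coe, Ideal.mem_comap]
      refine Ideal.mem_span_singleton.2 ⟨1, ?_⟩
      simp only [hp, hq, v1, map_add, map_sub, map_mul, map_pow, map_one, aeval_X,
        Matrix.cons_val_zero, Matrix.cons_val_one, Matrix.head_cons, aeval_C, algebraMap_eq]
      linear_combination (X 0^2*C ((1:ℂ)/2)^2 + (-2:R2)*X 0^2*X 1*C ((1:ℂ)/2)^2 + X 0^2*X 1^2*C ((1:ℂ)/2)^2) * hI2 + (X 0^2*X 1 + (2:R2)*X 0^2*X 1*C ((1:ℂ)/2)) * h2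
    intro a ha
    show Ideal.Quotient.mk _ ((aeval v1) a) = 0
    exact Ideal.Quotient.eq_zero_iff_mem.2 (key ha)
  have hGmem : ∀ a ∈ Ideal.span {q}, ((Ideal.Quotient.mkₐ ℂ (Ideal.span {p})).comp (aeval v2)) a = 0 := by
    have key : Ideal.span {q} ≤ Ideal.comap (aeval v2) (Ideal.span {p}) := by
      rw [Ideal.span_le]
      rintro _ rfl
      simp only [SetLike.mem_coe, Ideal.mem_comap]
      refine Ideal.mem_span_singleton.2 ⟨X 0^2 + X 1^2 + 1, ?_⟩
      simp only [hp, hq, v2, map_add, map_sub, map_mul, map_pow, map_one, aeval_X,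
        Matrix.cons_val_zero, Matrix.cons_val_one, Matrix.head_cons, aeval_C, algebraMap_eq]
      linear_combination ((-1:R2)*X 1^4 + X 1^4*C Complex.I^2 + (-2:R2)*X 0^2*X 1^2) * hI2
    intro a ha
    show Ideal.Quotient.mk _ ((aeval v2) a) = 0
    exact Ideal.Quotient.eq_zero_iff_mem.2 (key ha)
  set F : (R2 ⧸ Ideal.span {p}) →ₐ[ℂ] (R2 ⧸ Ideal.span {q}) :=
    Ideal.Quotient.liftₐ _ ((Ideal.Quotient.mkₐ ℂ (Ideal.span {q})).comp (aeval v1)) hFmem with hF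
  set G : (R2 ⧸ Ideal.span {q}) →ₐ[ℂ] (R2 ⧸ Ideal.span {p}) :=
    Ideal.Quotient.liftₐ _ ((Ideal.Quotient.mkₐ ℂ (Ideal.span {p})).comp (aeval v2)) hGmem with hG
  have hsimp : ∀ (x : R2), F (Ideal.Quotient.mk (Ideal.span {p}) x)
      = Ideal.Quotient.mk (Ideal.span {q}) (aeval v1 x) := fun x => rfl
  have hsimp2 : ∀ (x : R2), G (Ideal.Quotient.mk (Ideal.span {q}) x)
      = Ideal.Quotient.mk (Ideal.span {p}) (aeval v2 x) := fun x => rfl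
  refine ⟨AlgEquiv.ofAlgHom F G ?_ ?_⟩
  · refine Ideal.Quotient.algHom_ext ℂ (MvPolynomial.algHom_ext fun i => ?_)
    have h0 : ((F.comp G).comp (Ideal.Quotient.mkₐ ℂ (Ideal.span {q}))) ((X i : R2))
        = Ideal.Quotient.mk (Ideal.span {q}) (aeval v1 (aeval v2 (X i : R2))) := by
      simp only [AlgHom.coe_comp, Function.comp_apply, Ideal.Quotient.mkₐ_eq_mk, hsimp, hsimp2]
    rw [h0]
    have h1 : ((AlgHom.id ℂ _).comp (Ideal.Quotient.mkₐ ℂ (Ideal.span {q}))) ((X i : R2))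
        = Ideal.Quotient.mk (Ideal.span {q}) (X i) := rfl
    rw [h1, Ideal.Quotient.eq]
    fin_cases i
    · refine Ideal.mem_span_singleton.2 ⟨0, ?_⟩
      simp only [hq, v1, v2, map_add, map_sub, map_mul, map_pow, map_one, map_neg, aeval_X,
        Matrix.cons_val_zero, Matrix.cons_val_one, Matrix.head_cons, aeval_C, algebraMap_eq,
        Fin.isValue, Fin.mk_one, Fin.zero_eta]
      linear_combination ((-1:R2)*X 0*C ((1:ℂ)/2) + X 0*X 1*C ((1:ℂ)/2)) * hI2 + (X 0) * h2
    · refine Ideal.mem_span_singleton.2 ⟨X 1, ?_⟩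
      simp only [hq, v1, v2, map_add, map_sub, map_mul, map_pow, map_one, map_neg, aeval_X,
        Matrix.cons_val_zero, Matrix.cons_val_one, Matrix.head_cons, aeval_C, algebraMap_eq,
        Fin.isValue, Fin.mk_one, Fin.zero_eta]
      linear_combination (X 0^2*C ((1:ℂ)/2)^2 + X 0^2*C Complex.I^2*C ((1:ℂ)/2)^2 + (2:R2)*X 0^2*X 1*C ((1:ℂ)/2)^2 + (-2:R2)*X 0^2*X 1*C Complex.I^2*C ((1:ℂ)/2)^2 + (-3:R2)*X 0^2*X 1^2*C ((1:ℂ)/2)^2 + X 0^2*X 1^2*C Complex.I^2*C ((1:ℂ)/2)^2) * hI2 + (X 0^2*X 1^2 + (2:R2)*X 0^2*X 1^2*C ((1:ℂ)/2)) * h2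
  · refine Ideal.Quotient.algHom_ext ℂ (MvPolynomial.algHom_ext fun i => ?_)
    have h0 : ((G.comp F).comp (Ideal.Quotient.mkₐ ℂ (Ideal.span {p}))) ((X i : R2))
        = Ideal.Quotient.mk (Ideal.span {p}) (aeval v2 (aeval v1 (X i : R2))) := by
      simp only [AlgHom.coe_comp, Function.comp_apply, Ideal.Quotient.mkₐ_eq_mk, hsimp, hsimp2]
    rw [h0]
    have h1 : ((AlgHom.id ℂ _).comp (Ideal.Quotient.mkₐ ℂ (Ideal.span {p}))) ((X i : R2))
        = Ideal.Quotient.mk (Ideal.span {p}) (X i) := rfl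
    rw [h1, Ideal.Quotient.eq]
    fin_cases i
    · refine Ideal.mem_span_singleton.2 ⟨C ((1:ℂ)/2) * (X 0 - C Complex.I * X 1), ?_⟩
      simp only [hp, v1, v2, map_add, map_sub, map_mul, map_pow, map_one, map_neg, aeval_X,
        Matrix.cons_val_zero, Matrix.cons_val_one, Matrix.head_cons, aeval_C, algebraMap_eq,
        Fin.isValue, Fin.mk_one, Fin.zero_eta]
      linear_combination (X 1^3*C Complex.I*C ((1:ℂ)/2) + (-1:R2)*X 0*X 1^2*C ((1:ℂ)/2)) * hI2 + (X 0) * h2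
    · refine Ideal.mem_span_singleton.2 ⟨C ((1:ℂ)/2) * (C Complex.I * X 0 + X 1), ?_⟩
      simp only [hp, v1, v2, map_add, map_sub, map_mul, map_pow, map_one, map_neg, aeval_X,
        Matrix.cons_val_zero, Matrix.cons_val_one, Matrix.head_cons, aeval_C, algebraMap_eq,
        Fin.isValue, Fin.mk_one, Fin.zero_eta]
      linear_combination ((-1:R2)*X 1*C ((1:ℂ)/2) + (-1:R2)*X 1^3*C ((1:ℂ)/2) + X 1^3*C Complex.I^2*C ((1:ℂ)/2) + (-1:R2)*X 0*X 1^2*C Complex.I*C ((1:ℂ)/2) + (-1:R2)*X 0^2*X 1*C ((1:ℂ)/2)) * hI2 + (X 1) * h2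

end

/-- Example 3.2 of the paper: with `x = X 0`, `y = X 1` in `ℂ[x,y]`, the complex circle
`p = x² + y² - 1` and the curve `q = x²y - 1` give (a) isomorphic quotient algebras,
while (b) no `ℂ`-algebra automorphism of `ℂ[x,y]` maps `⟨p⟩` onto `⟨q⟩`. -/
theorem example_3_2
    (p q : MvPolynomial (Fin 2) ℂ)
    (hp : p = X 0 ^ 2 + X 1 ^ 2 - 1)
    (hq : q = X 0 ^ 2 * X 1 - 1) :
    Nonempty ((MvPolynomial (Fin 2) ℂ ⧸ Ideal.span {p}) ≃ₐ[ℂ]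
      (MvPolynomial (Fin 2) ℂ ⧸ Ideal.span {q})) ∧
    ¬ ∃ σ : MvPolynomial (Fin 2) ℂ ≃ₐ[ℂ] MvPolynomial (Fin 2) ℂ,
      Ideal.map σ (Ideal.span {p}) = Ideal.span {q} := by
  exact ⟨parta p q hp hq, partb p q hp hq⟩
end
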